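/- Let G = (C, S, E) be a finite bipartite graph, w : C → ℤ>0 client weights, ℓ a natural number, and (x_0, …, x_ℓ) a maximally-nested integral fractional (w, 2^i)-nested matching hierarchy on G. Then for every real p ≥ 1, ∑_{s ∈ S} x_ℓ(δ(s))^p ≥ x_0(E) + ∑_{i=1}^{ℓ} p·2^{(i−1)(p−1)}·(x_i − x_{i−1})(E). -/

import Mathlib

/-- Convexity of `t ↦ t^p` for `p ≥ 1`: tangent line inequality at `a > 0`. -/
lemma stmt5_bern (p : ℝ) (hp : 1 ≤ p) {a t : ℝ} (ha : 0 < a) (hat : a ≤ t) :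
    a ^ p + p * a ^ (p - 1) * (t - a) ≤ t ^ p := by
  have hb := one_add_mul_self_le_rpow_one_add
    (by have : 0 ≤ t / a := div_nonneg (ha.le.trans hat) ha.le; linarith : (-1 : ℝ) ≤ t / a - 1) hp
  have key : 1 + p * (t / a - 1) ≤ (t / a) ^ p := by
    rwa [add_sub_cancel] at hb
  have hap : (0 : ℝ) < a ^ p := Real.rpow_pos_of_pos ha p
  have h1 : a ^ (p - 1) = a ^ p / a := by
    rw [Real.rpow_sub ha, Real.rpow_one]
  have h2 : a ^ p + p * a ^ (p - 1) * (t - a) = a ^ p * (1 + p * (t / a - 1)) := by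
    rw [h1]; field_simp
  rw [h2]
  calc a ^ p * (1 + p * (t / a - 1)) ≤ a ^ p * ((t / a) ^ p) :=
        mul_le_mul_of_nonneg_left key hap.le
    _ = t ^ p := by
        rw [Real.div_rpow (ha.le.trans hat) ha.le]
        field_simp

/-- Per-server telescoping inequality. -/
lemma stmt5_helper (p : ℝ) (hp : 1 ≤ p) (ℓ : ℕ) (y : ℕ → ℝ)
    (h0 : y 0 = 0 ∨ y 0 = 1)
    (hmono : ∀ i, 1 ≤ i → i ≤ ℓ → y (i - 1) ≤ y i)
    (hmax : ∀ i < ℓ, y (i + 1) ≠ y i → y i = 2 ^ i) :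
    y 0 + ∑ i ∈ Finset.Icc 1 ℓ,
        p * (2 : ℝ) ^ (((i : ℝ) - 1) * (p - 1)) * (y i - y (i - 1)) ≤ (y ℓ) ^ p := by
  induction ℓ with
  | zero =>
      simp only [Finset.Icc_self, Finset.Icc_eq_empty_of_lt (by norm_num : (1:ℕ) > 0)]
      rcases h0 with h | h <;> simp [h, Real.zero_rpow (by linarith : p ≠ 0)]
  | succ n ih =>
      have ihn := ih (fun i h1 h2 => hmono i h1 (h2.trans (Nat.le_succ n)))
        (fun i hi => hmax i (hi.trans (Nat.lt_succ_self n)))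
      rw [Finset.sum_Icc_succ_top (by omega : 1 ≤ n + 1), ← add_assoc]
      have hsimp : y (n + 1 - 1) = y n := by norm_num
      rw [hsimp]
      have hcast : (2 : ℝ) ^ ((((n + 1 : ℕ) : ℝ) - 1) * (p - 1))
          = ((2 : ℝ) ^ n) ^ (p - 1) := by
        rw [← Real.rpow_natCast 2 n, ← Real.rpow_mul (by norm_num)]
        push_cast; ring_nf
      by_cases hne : y (n + 1) = y n
      · rw [hne]
        simpa using ihn
      · have hyn : y n = 2 ^ n := hmax n (Nat.lt_succ_self n) hne
        have hmn : y n ≤ y (n + 1) := by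
          simpa using hmono (n + 1) (by omega) le_rfl
        have hb := stmt5_bern p hp (a := 2 ^ n) (t := y (n + 1))
          (by positivity) (hyn ▸ hmn)
        calc y 0 + ∑ i ∈ Finset.Icc 1 n,
              p * (2:ℝ) ^ (((i:ℝ) - 1) * (p - 1)) * (y i - y (i - 1))
              + p * (2:ℝ) ^ ((((n+1:ℕ):ℝ) - 1) * (p - 1)) * (y (n+1) - y n)
            ≤ y n ^ p + p * (2:ℝ) ^ ((((n+1:ℕ):ℝ) - 1) * (p - 1)) * (y (n+1) - y n) := by
              linarith [ihn]
          _ = ((2:ℝ) ^ n) ^ p + p * ((2:ℝ) ^ n) ^ (p - 1) * (y (n+1) - 2 ^ n) := by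
              rw [hcast, hyn]
          _ ≤ y (n + 1) ^ p := hb

theorem stmt_5 {C S : Type*} [Fintype C] [Fintype S] [DecidableEq C] [DecidableEq S]
    (E : Finset (C × S)) (w : C → ℤ) (hw : ∀ c, 0 < w c)
    (ℓ : ℕ) (x : ℕ → C × S → ℝ)
    (hnn : ∀ i ≤ ℓ, ∀ e, 0 ≤ x i e)
    (hclient : ∀ i ≤ ℓ, ∀ c : C, ∑ e ∈ E.filter (fun e => e.1 = c), x i e ≤ (w c : ℝ))
    (hserver : ∀ i ≤ ℓ, ∀ s : S, ∑ e ∈ E.filter (fun e => e.2 = s), x i e ≤ 2 ^ i)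
    (hnested : ∀ i, 1 ≤ i → i ≤ ℓ → ∀ e, x (i - 1) e ≤ x i e)
    (hintegral : ∀ i ≤ ℓ, ∀ e, ∃ n : ℤ, x i e = (n : ℝ))
    (hmaxnested : ∀ i < ℓ, ∀ s : S,
      (∑ e ∈ E.filter (fun e => e.2 = s), x (i + 1) e) ≠
          (∑ e ∈ E.filter (fun e => e.2 = s), x i e) →
        (∑ e ∈ E.filter (fun e => e.2 = s), x i e) = 2 ^ i)
    (p : ℝ) (hp : 1 ≤ p) :
    (∑ e ∈ E, x 0 e) +
        ∑ i ∈ Finset.Icc 1 ℓ,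
          p * (2 : ℝ) ^ (((i : ℝ) - 1) * (p - 1)) * (∑ e ∈ E, (x i e - x (i - 1) e))
      ≤ ∑ s : S, (∑ e ∈ E.filter (fun e => e.2 = s), x ℓ e) ^ p := by
  classical
  set y : ℕ → S → ℝ := fun i s => ∑ e ∈ E.filter (fun e => e.2 = s), x i e with hy
  have hfib : ∀ f : C × S → ℝ,
      ∑ s : S, ∑ e ∈ E.filter (fun e => e.2 = s), f e = ∑ e ∈ E, f e := by
    intro f
    exact Finset.sum_fiberwise E Prod.snd f
  have hLHS : (∑ e ∈ E, x 0 e) +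
        ∑ i ∈ Finset.Icc 1 ℓ,
          p * (2 : ℝ) ^ (((i : ℝ) - 1) * (p - 1)) * (∑ e ∈ E, (x i e - x (i - 1) e))
      = ∑ s : S, (y 0 s + ∑ i ∈ Finset.Icc 1 ℓ,
          p * (2 : ℝ) ^ (((i : ℝ) - 1) * (p - 1)) * (y i s - y (i - 1) s)) := by
    rw [Finset.sum_add_distrib, ← hfib (x 0)]
    congr 1
    rw [Finset.sum_comm]
    apply Finset.sum_congr rfl
    intro i _
    rw [← Finset.mul_sum, ← hfib (fun e => x i e - x (i - 1) e)]
    congr 1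
    apply Finset.sum_congr rfl
    intro s _
    rw [Finset.sum_sub_distrib]
  rw [hLHS]
  apply Finset.sum_le_sum
  intro s _
  apply stmt5_helper p hp ℓ (fun i => y i s)
  · -- y 0 s is an integer in [0, 1]
    have hint : ∃ n : ℤ, y 0 s = (n : ℝ) := by
      choose f hf using hintegral 0 (Nat.zero_le ℓ)
      refine ⟨∑ e ∈ E.filter (fun e => e.2 = s), f e, ?_⟩
      rw [hy]
      push_cast
      exact Finset.sum_congr rfl fun e _ => hf e
    obtain ⟨n, hn⟩ := hint
    have h1 : (0 : ℝ) ≤ y 0 s :=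
      Finset.sum_nonneg fun e _ => hnn 0 (Nat.zero_le ℓ) e
    have h2 : y 0 s ≤ 1 := by
      simpa using hserver 0 (Nat.zero_le ℓ) s
    rw [hn] at h1 h2 ⊢
    have : n = 0 ∨ n = 1 := by
      have : (0:ℤ) ≤ n := by exact_mod_cast h1
      have : n ≤ 1 := by exact_mod_cast h2
      omega
    rcases this with h | h <;> simp [h]
  · intro i h1 h2
    exact Finset.sum_le_sum fun e _ => hnested i h1 h2 e
  · intro i hi hne
    exact hmaxnested i hi s hne
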